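/- Let κ be measurable with κ^{<κ} = κ, U, W κ-complete ultrafilters on κ with U ≤_RK W witnessed by a surjection f : κ → κ. Then the map φ : 𝕄_W → 𝕄_U defined by φ(a, A) = (f[a], f[A]) is a projection of forcing notions: it is order-preserving, and whenever q ≤ φ(p) in 𝕄_U there is p' ≤ p in 𝕄_W with φ(p') ≤ q. -/

import Mathlib

open Cardinal Set

namespace PaperFormal

/-- `A` is unbounded in `κ` (as a set of ordinals below `κ`). -/
def UnboundedIn (κ : Ordinal.{0}) (A : Set Ordinal) : Prop :=
  ∀ α < κ, ∃ β ∈ A, α ≤ β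

/-- `A ⊆* B`: almost inclusion (mod bounded) below `κ`. -/
def AlmostSub (κ : Ordinal.{0}) (A B : Set Ordinal) : Prop :=
  ∃ α < κ, ∀ β ∈ A, α ≤ β → β ∈ B

/-- `C` is closed in `κ`. -/
def ClosedIn (κ : Ordinal.{0}) (C : Set Ordinal) : Prop :=
  ∀ α, α < κ → α ≠ 0 → (∀ β < α, (C ∩ Set.Ioo β α).Nonempty) → α ∈ C

/-- `C` is a club (closed unbounded set) in `κ`. -/
def IsClub (κ : Ordinal.{0}) (C : Set Ordinal) : Prop :=
  C ⊆ Set.Iio κ ∧ UnboundedIn κ C ∧ ClosedIn κ C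

/-- `f` maps `κ` into `κ`. -/
def FunOn (κ : Ordinal.{0}) (f : Ordinal → Ordinal) : Prop :=
  ∀ β < κ, f β < κ

/-- almost everywhere domination `f ≤* g` on `κ`. -/
def LeStar (κ : Ordinal.{0}) (f g : Ordinal → Ordinal) : Prop :=
  ∃ α < κ, ∀ β, α ≤ β → β < κ → f β ≤ g β

def UnboundedFunFam (κ : Ordinal.{0}) (𝒜 : Set (Ordinal → Ordinal)) : Prop :=
  (∀ f ∈ 𝒜, FunOn κ f) ∧ ∀ g, FunOn κ g → ∃ f ∈ 𝒜, ¬ LeStar κ f g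

def DominatingFunFam (κ : Ordinal.{0}) (𝒜 : Set (Ordinal → Ordinal)) : Prop :=
  (∀ f ∈ 𝒜, FunOn κ f) ∧ ∀ g, FunOn κ g → ∃ f ∈ 𝒜, LeStar κ g f

/-- the generalized bounding number `𝔟_κ`. -/
noncomputable def bNum (κ : Ordinal.{0}) : Cardinal :=
  sInf { μ : Cardinal.{0} | ∃ 𝒜, UnboundedFunFam κ 𝒜 ∧ #𝒜 = Cardinal.lift.{1} μ }

/-- the generalized dominating number `𝔡_κ`. -/
noncomputable def dNum (κ : Ordinal.{0}) : Cardinal :=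
  sInf { μ : Cardinal.{0} | ∃ 𝒜, DominatingFunFam κ 𝒜 ∧ #𝒜 = Cardinal.lift.{1} μ }

/-- a (proper) filter on `κ`. -/
structure IsKFilter (κ : Ordinal.{0}) (F : Set (Set Ordinal)) : Prop where
  subset : ∀ A ∈ F, A ⊆ Set.Iio κ
  univ_mem : Set.Iio κ ∈ F
  upward : ∀ A ∈ F, ∀ B, B ⊆ Set.Iio κ → A ⊆ B → B ∈ F
  inter : ∀ A ∈ F, ∀ B ∈ F, A ∩ B ∈ F
  proper : ∅ ∉ F

/-- an ultrafilter on `κ`. -/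
structure IsKUltrafilter (κ : Ordinal.{0}) (U : Set (Set Ordinal)) extends IsKFilter κ U : Prop where
  decide : ∀ A, A ⊆ Set.Iio κ → A ∈ U ∨ (Set.Iio κ \ A) ∈ U

/-- uniformity: every member is unbounded (equivalently, for regular `κ`, of size `κ`). -/
def Uniform (κ : Ordinal.{0}) (F : Set (Set Ordinal)) : Prop :=
  ∀ A ∈ F, UnboundedIn κ A

/-- `κ`-completeness. -/
def KComplete (κ : Ordinal.{0}) (F : Set (Set Ordinal)) : Prop :=
  ∀ s : Set (Set Ordinal), s ⊆ F → s.Nonempty → #s < Cardinal.lift.{1} κ.card → ⋂₀ s ∈ F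

/-- closure under diagonal intersections. -/
def DiagClosed (κ : Ordinal.{0}) (F : Set (Set Ordinal)) : Prop :=
  ∀ A : Ordinal → Set Ordinal, (∀ i < κ, A i ∈ F) →
    {β | β < κ ∧ ∀ i < β, β ∈ A i} ∈ F

/-- a normal ultrafilter on `κ`: `κ`-complete, contains all clubs, closed under
diagonal intersections. -/
def NormalUF (κ : Ordinal.{0}) (U : Set (Set Ordinal)) : Prop :=
  IsKUltrafilter κ U ∧ Uniform κ U ∧ KComplete κ U ∧
    (∀ C, IsClub κ C → C ∈ U) ∧ DiagClosed κ U

/-- `ℬ` is a `⊆*`-base for `F`. -/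
def IsBase (κ : Ordinal.{0}) (F ℬ : Set (Set Ordinal)) : Prop :=
  ℬ ⊆ F ∧ ∀ A ∈ F, ∃ B ∈ ℬ, AlmostSub κ B A

/-- the character of a filter. -/
noncomputable def chNum (κ : Ordinal.{0}) (F : Set (Set Ordinal)) : Cardinal :=
  sInf { μ : Cardinal.{0} | ∃ ℬ, IsBase κ F ℬ ∧ #ℬ = Cardinal.lift.{1} μ }

/-- there is a `⊆*`-decreasing `λ`-sequence in `F` with no `⊆*`-lower bound in `F`. -/
def HasTower (κ : Ordinal.{0}) (F : Set (Set Ordinal)) (lam : Cardinal) : Prop :=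
  ∃ S : Ordinal → Set Ordinal, (∀ i < lam.ord, S i ∈ F) ∧
    (∀ i j, i < j → j < lam.ord → AlmostSub κ (S j) (S i)) ∧
    ¬ ∃ Y ∈ F, ∀ i < lam.ord, AlmostSub κ Y (S i)

/-- the depth `𝔱(F)` of a filter. -/
noncomputable def tNum (κ : Ordinal.{0}) (F : Set (Set Ordinal)) : Cardinal :=
  sInf { μ : Cardinal.{0} | μ.IsRegular ∧ HasTower κ F μ }

/-- the ultrafilter number `𝔲_κ`. -/
noncomputable def uNum (κ : Ordinal.{0}) : Cardinal :=
  sInf { μ : Cardinal.{0} | ∃ U, IsKUltrafilter κ U ∧ Uniform κ U ∧ chNum κ U = μ }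

/-- the complete ultrafilter number `𝔲^com_κ`. -/
noncomputable def uComNum (κ : Ordinal.{0}) : Cardinal :=
  sInf { μ : Cardinal.{0} | ∃ U, IsKUltrafilter κ U ∧ Uniform κ U ∧ KComplete κ U ∧ chNum κ U = μ }

/-- `U` is a simple `P_λ`-point: a uniform ultrafilter with a `⊆*`-decreasing
generating sequence of length `λ`. -/
def SimplePPoint (κ : Ordinal.{0}) (lam : Cardinal) (U : Set (Set Ordinal)) : Prop :=
  IsKUltrafilter κ U ∧ Uniform κ U ∧
    ∃ S : Ordinal → Set Ordinal, (∀ i < lam.ord, S i ∈ U) ∧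
      (∀ i j, i < j → j < lam.ord → AlmostSub κ (S j) (S i)) ∧
      ∀ A ∈ U, ∃ i < lam.ord, AlmostSub κ (S i) A

/-- a `⊆*`-decreasing generating sequence of length `λ` for a filter `F`. -/
def SimplePFilter (κ : Ordinal.{0}) (lam : Cardinal) (F : Set (Set Ordinal)) : Prop :=
  ∃ S : Ordinal → Set Ordinal, (∀ i < lam.ord, S i ∈ F) ∧
    (∀ i j, i < j → j < lam.ord → AlmostSub κ (S j) (S i)) ∧
    ∀ A ∈ F, ∃ i < lam.ord, AlmostSub κ (S i) A

/-- `ℬ` is a `π`-base for `U`: unbounded sets, almost contained in members of `U`. -/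
def IsPiBase (κ : Ordinal.{0}) (U ℬ : Set (Set Ordinal)) : Prop :=
  (∀ B ∈ ℬ, B ⊆ Set.Iio κ ∧ UnboundedIn κ B) ∧ ∀ A ∈ U, ∃ B ∈ ℬ, AlmostSub κ B A

/-- the `π`-character `πch(U)`. -/
noncomputable def piChNum (κ : Ordinal.{0}) (U : Set (Set Ordinal)) : Cardinal :=
  sInf { μ : Cardinal.{0} | ∃ ℬ, IsPiBase κ U ℬ ∧ #ℬ = Cardinal.lift.{1} μ }

/-- `Y` is a pseudo-intersection of the family `𝒜`. -/
def IsPseudoInter (κ : Ordinal.{0}) (𝒜 : Set (Set Ordinal)) (Y : Set Ordinal) : Prop :=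
  Y ⊆ Set.Iio κ ∧ UnboundedIn κ Y ∧ ∀ A ∈ 𝒜, AlmostSub κ Y A

/-- `π𝔭(U)`: the least size of a subfamily of `U` with no pseudo-intersection. -/
noncomputable def piPNum (κ : Ordinal.{0}) (U : Set (Set Ordinal)) : Cardinal :=
  sInf { μ : Cardinal.{0} | ∃ 𝒜, 𝒜 ⊆ U ∧ #𝒜 = Cardinal.lift.{1} μ ∧ ¬ ∃ Y, IsPseudoInter κ 𝒜 Y }

/-- a `⊆*`-decreasing `λ`-sequence in `U` unbounded in `([κ]^κ, ⊇*)`. -/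
def HasPiTower (κ : Ordinal.{0}) (U : Set (Set Ordinal)) (lam : Cardinal) : Prop :=
  ∃ S : Ordinal → Set Ordinal, (∀ i < lam.ord, S i ∈ U) ∧
    (∀ i j, i < j → j < lam.ord → AlmostSub κ (S j) (S i)) ∧
    ¬ ∃ Y, Y ⊆ Set.Iio κ ∧ UnboundedIn κ Y ∧ ∀ i < lam.ord, AlmostSub κ Y (S i)

/-- `π𝔱(U)`. -/
noncomputable def piTNum (κ : Ordinal.{0}) (U : Set (Set Ordinal)) : Cardinal :=
  sInf { μ : Cardinal.{0} | μ.IsRegular ∧ HasPiTower κ U μ }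

/-- `A` splits `B`. -/
def Splits (κ : Ordinal.{0}) (A B : Set Ordinal) : Prop :=
  UnboundedIn κ (B ∩ A) ∧ UnboundedIn κ (B \ A)

/-- the splitting number `𝔰_κ`. -/
noncomputable def sNum (κ : Ordinal.{0}) : Cardinal :=
  sInf { μ : Cardinal.{0} | ∃ 𝒜 : Set (Set Ordinal), (∀ A ∈ 𝒜, A ⊆ Set.Iio κ) ∧
    (∀ X, X ⊆ Set.Iio κ → UnboundedIn κ X → ∃ A ∈ 𝒜, Splits κ A X) ∧ #𝒜 = Cardinal.lift.{1} μ }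

/-- the reaping number `𝔯_κ`. -/
noncomputable def rNum (κ : Ordinal.{0}) : Cardinal :=
  sInf { μ : Cardinal.{0} | ∃ 𝒜 : Set (Set Ordinal), (∀ A ∈ 𝒜, A ⊆ Set.Iio κ ∧ UnboundedIn κ A) ∧
    (¬ ∃ X, X ⊆ Set.Iio κ ∧ ∀ A ∈ 𝒜, Splits κ X A) ∧ #𝒜 = Cardinal.lift.{1} μ }

/-- `f` is almost one-to-one modulo `U`: bounded-to-one on a set in `U`. -/
def AlmostInjMod (κ : Ordinal.{0}) (U : Set (Set Ordinal)) (f : Ordinal → Ordinal) : Prop :=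
  ∃ X ∈ U, ∀ γ < κ, ∃ α < κ, ∀ β ∈ X, f β = γ → β < α

/-- the pushforward `f_*(U)`. -/
def PushFwd (κ : Ordinal.{0}) (f : Ordinal → Ordinal) (U : Set (Set Ordinal)) :
    Set (Set Ordinal) :=
  { A | A ⊆ Set.Iio κ ∧ (Set.Iio κ ∩ f ⁻¹' A) ∈ U }

/-- countable completeness. -/
def CountablyComplete (U : Set (Set Ordinal)) : Prop :=
  ∀ s : Set (Set Ordinal), s ⊆ U → s.Countable → s.Nonempty → ⋂₀ s ∈ U


/-- a condition of the generalized Mathias forcing `𝕄_F`. -/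
def MathiasCond (κ : Ordinal.{0}) (F : Set (Set Ordinal))
    (p : Set Ordinal × Set Ordinal) : Prop :=
  p.1 ⊆ Set.Iio κ ∧ #p.1 < Cardinal.lift.{1} κ.card ∧ p.2 ∈ F

/-- the Mathias ordering: `(a, A) ≤ (b, B)` iff `b ⊆ a`, `A ⊆ B`, `a \ b ⊆ B`. -/
def MathiasLe (p q : Set Ordinal × Set Ordinal) : Prop :=
  q.1 ⊆ p.1 ∧ p.2 ⊆ q.2 ∧ p.1 \ q.1 ⊆ q.2

/-- if `U ≤_RK W` via a surjection `f`, then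
`φ(a, A) = (f[a], f[A])` is a projection from `𝕄_W` onto `𝕄_U`. -/
theorem stmt17 (κ : Cardinal.{0}) (hreg : κ.IsRegular) (hunc : Cardinal.aleph0 < κ)
    (hpow : Cardinal.powerlt κ κ = κ)
    (U W : Set (Set Ordinal))
    (hU : IsKUltrafilter κ.ord U) (hUuni : Uniform κ.ord U) (hUcom : KComplete κ.ord U)
    (hW : IsKUltrafilter κ.ord W) (hWuni : Uniform κ.ord W) (hWcom : KComplete κ.ord W)
    (f : Ordinal → Ordinal) (hf : FunOn κ.ord f)
    (hsurj : ∀ γ < κ.ord, ∃ β < κ.ord, f β = γ)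
    (hRK : ∀ A, A ⊆ Set.Iio κ.ord → (A ∈ U ↔ (Set.Iio κ.ord ∩ f ⁻¹' A) ∈ W)) :
    (∀ p, MathiasCond κ.ord W p → MathiasCond κ.ord U (f '' p.1, f '' p.2)) ∧
    (∀ p q, MathiasCond κ.ord W p → MathiasCond κ.ord W q → MathiasLe p q →
      MathiasLe (f '' p.1, f '' p.2) (f '' q.1, f '' q.2)) ∧
    (∀ p, MathiasCond κ.ord W p → ∀ q, MathiasCond κ.ord U q →
      MathiasLe q (f '' p.1, f '' p.2) →
      ∃ p', MathiasCond κ.ord W p' ∧ MathiasLe p' p ∧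
        MathiasLe (f '' p'.1, f '' p'.2) q) := by
  have hcard : κ.ord.card = κ := Cardinal.card_ord κ
  have hal : Cardinal.aleph0 ≤ Cardinal.lift.{1} κ.ord.card := by
    rw [hcard, ← Cardinal.lift_aleph0.{1,0}]; exact Cardinal.lift_le.mpr hunc.le
  -- image of a member of W is in U
  have himg : ∀ A ∈ W, f '' A ∈ U := by
    intro A hA
    have hAsub : A ⊆ Set.Iio κ.ord := hW.subset A hA
    have hsub : f '' A ⊆ Set.Iio κ.ord := by
      rintro γ ⟨β, hβ, rfl⟩; exact hf β (hAsub hβ)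
    rw [hRK _ hsub]
    refine hW.upward A hA _ (Set.inter_subset_left) ?_
    intro β hβ
    exact ⟨hAsub hβ, ⟨β, hβ, rfl⟩⟩
  have hcondimg : ∀ p, MathiasCond κ.ord W p → MathiasCond κ.ord U (f '' p.1, f '' p.2) := by
    rintro ⟨a, A⟩ ⟨ha1, ha2, hA⟩
    refine ⟨?_, lt_of_le_of_lt (Cardinal.mk_image_le) ha2, himg A hA⟩
    rintro γ ⟨β, hβ, rfl⟩; exact hf β (ha1 hβ)
  refine ⟨hcondimg, ?_, ?_⟩
  · rintro ⟨a, A⟩ ⟨b, B⟩ _ _ ⟨h1, h2, h3⟩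
    refine ⟨Set.image_mono (f := f) h1, Set.image_mono (f := f) h2, ?_⟩
    rintro γ ⟨⟨β, hβ, rfl⟩, hγ⟩
    have hβb : β ∉ b := fun hb => hγ ⟨β, hb, rfl⟩
    exact ⟨β, h3 ⟨hβ, hβb⟩, rfl⟩
  · rintro ⟨b, B⟩ ⟨hb1, hb2, hB⟩ ⟨c, C⟩ ⟨hc1, hc2, hC⟩ ⟨hq1, hq2, hq3⟩
    simp only at hq1 hq2 hq3 hb1 hb2 hB hc1 hc2 hC ⊢
    -- choose for each γ ∈ c \ f '' b some β ∈ B with f β = γ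
    have hchoice : ∀ γ ∈ c \ f '' b, ∃ β ∈ B, f β = γ := by
      intro γ hγ
      obtain ⟨β, hβ, hfβ⟩ := hq3 hγ
      exact ⟨β, hβ, hfβ⟩
    choose g hg1 hg2 using hchoice
    classical
    let d : Set Ordinal := {β | ∃ γ, ∃ h : γ ∈ c \ f '' b, g γ h = β}
    have hdB : d ⊆ B := by rintro β ⟨γ, h, rfl⟩; exact hg1 γ h
    have hfd : f '' d = c \ f '' b := by
      ext γ; constructor
      · rintro ⟨β, ⟨γ', h', rfl⟩, rfl⟩; rw [hg2 γ' h']; exact h'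
      · intro hγ; exact ⟨g γ hγ, ⟨γ, hγ, rfl⟩, hg2 γ hγ⟩
    have hdcard : #d ≤ #(c \ f '' b : Set Ordinal) := by
      have : d = Set.range (fun x : (c \ f '' b : Set Ordinal) => g x.1 x.2) := by
        ext β; constructor
        · rintro ⟨γ, h, rfl⟩; exact ⟨⟨γ, h⟩, rfl⟩
        · rintro ⟨⟨γ, h⟩, rfl⟩; exact ⟨γ, h, rfl⟩
      rw [this]
      exact Cardinal.mk_range_le
    refine ⟨(b ∪ d, B ∩ (f ⁻¹' C) ∩ Set.Iio κ.ord), ⟨?_, ?_, ?_⟩, ⟨?_, ?_, ?_⟩, ?_, ?_, ?_⟩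
    · exact Set.union_subset hb1 (fun β hβ => hW.subset B hB (hdB hβ))
    · calc #(b ∪ d : Set Ordinal) ≤ #b + #d := Cardinal.mk_union_le _ _
        _ < Cardinal.lift.{1} κ.ord.card := by
          apply Cardinal.add_lt_of_lt hal hb2
          exact lt_of_le_of_lt (hdcard.trans (Cardinal.mk_le_mk_of_subset (Set.diff_subset))) hc2
    · have hpre : (Set.Iio κ.ord ∩ f ⁻¹' C) ∈ W := (hRK C (hU.subset C hC)).mp hC
      have : B ∩ (f ⁻¹' C) ∩ Set.Iio κ.ord = B ∩ (Set.Iio κ.ord ∩ f ⁻¹' C) := by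
        ext x; constructor
        · rintro ⟨⟨h1, h2⟩, h3⟩; exact ⟨h1, h3, h2⟩
        · rintro ⟨h1, h3, h2⟩; exact ⟨⟨h1, h2⟩, h3⟩
      rw [this]
      exact hW.inter B hB _ hpre
    · exact Set.subset_union_left
    · exact (Set.inter_subset_left).trans Set.inter_subset_left
    · intro β hβ
      rcases hβ.1 with h | h
      · exact absurd h hβ.2
      · exact hdB h
    · -- c ⊆ f '' (b ∪ d)
      intro γ hγ
      by_cases hγb : γ ∈ f '' b
      · obtain ⟨β, hβ, rfl⟩ := hγb; exact ⟨β, Or.inl hβ, rfl⟩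
      · have : γ ∈ f '' d := hfd ▸ ⟨hγ, hγb⟩
        obtain ⟨β, hβ, rfl⟩ := this; exact ⟨β, Or.inr hβ, rfl⟩
    · rintro γ ⟨β, ⟨⟨_, hβC⟩, _⟩, rfl⟩
      exact hβC
    · rintro γ ⟨⟨β, hβ, rfl⟩, hγ⟩
      exfalso; apply hγ
      rcases hβ with h | h
      · exact hq1 ⟨β, h, rfl⟩
      · exact (hfd ▸ ⟨β, h, rfl⟩ : f β ∈ c \ f '' b).1

end PaperFormal
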